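/- Let p⁻, p⁺ be real numbers with 2 < p⁻ ≤ p⁺ and let B₁ ≥ 1. Define G : (0, ∞) → ℝ by G(α) = α/(2B₁²) − (1/p⁻)·max{α^{p⁺/2}, α^{p⁻/2}}, and set α₁ = (B₁²)^{−2/(p⁻−2)} and E₁ = (1/2 − 1/p⁻)·α₁^{p⁻/2}. Let α : [0, ∞) → (0, ∞) be continuous and let E : [0, ∞) → ℝ be non-increasing with G(α(t)) ≤ E(t) for all t ≥ 0. Assume E(0) < E₁ and α(0) > α₁. Then there exists α₂ > α₁ with G(α₂) = E(0) and α(t) ≥ α₂ for all t ≥ 0. -/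

import Mathlib

open Set Filter

private lemma aux_rpow_key (pm b : ℝ) (hpm : 2 < pm) (hb0 : 0 < b) :
    (b ^ (-2 / (pm - 2))) ^ (pm / 2 - 1) = b⁻¹ := by
  rw [← Real.rpow_mul hb0.le]
  have h2 : pm - 2 ≠ 0 := by linarith
  have : -2 / (pm - 2) * (pm / 2 - 1) = -1 := by field_simp
  rw [this, Real.rpow_neg_one]

private lemma aux_strictAnti (pm pp b : ℝ) (hpm : 2 < pm) (hpp : pm ≤ pp) (hb : 1 ≤ b) :
    StrictAntiOn (fun x : ℝ => x / (2 * b) - (1 / pm) * max (x ^ (pp / 2)) (x ^ (pm / 2)))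
      (Set.Ici (b ^ (-2 / (pm - 2)))) := by
  have hb0 : 0 < b := lt_of_lt_of_le one_pos hb
  set a₁ : ℝ := b ^ (-2 / (pm - 2)) with ha₁def
  have ha₁pos : 0 < a₁ := Real.rpow_pos_of_pos hb0 _
  have ha₁le1 : a₁ ≤ 1 :=
    Real.rpow_le_one_of_one_le_of_nonpos hb
      (div_nonpos_of_nonpos_of_nonneg (by norm_num) (by linarith))
  have key : a₁ ^ (pm / 2 - 1) = b⁻¹ := aux_rpow_key pm b hpm hb0
  set G : ℝ → ℝ := fun x => x / (2 * b) - (1 / pm) * max (x ^ (pp / 2)) (x ^ (pm / 2)) with hGdef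
  set F1 : ℝ → ℝ := fun x => x / (2 * b) - (1 / pm) * x ^ (pm / 2) with hF1def
  set F2 : ℝ → ℝ := fun x => x / (2 * b) - (1 / pm) * x ^ (pp / 2) with hF2def
  have hpm0 : (0:ℝ) < pm := by linarith
  have contpow : ∀ (q : ℝ) (s : Set ℝ), (∀ x ∈ s, x ≠ 0) → ContinuousOn (fun x : ℝ => x ^ q) s :=
    fun q s hs x hx => (Real.continuousAt_rpow_const x q (Or.inl (hs x hx))).continuousWithinAt
  -- F1 strictly decreasing on [a₁, 1]
  have hF1anti : StrictAntiOn F1 (Icc a₁ 1) := by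
    apply strictAntiOn_of_deriv_neg (convex_Icc _ _)
    · apply ContinuousOn.sub (continuousOn_id.div_const _)
      exact continuousOn_const.mul (contpow _ _ (fun x hx => ne_of_gt (lt_of_lt_of_le ha₁pos hx.1)))
    · intro x hx
      rw [interior_Icc] at hx
      obtain ⟨hx1, hx2⟩ := hx
      have hx0 : 0 < x := lt_trans ha₁pos hx1
      have hder : HasDerivAt F1 (1 / (2 * b) - (1 / pm) * (pm / 2 * x ^ (pm / 2 - 1))) x := by
        have h1 : HasDerivAt (fun x : ℝ => x / (2 * b)) (1 / (2 * b)) x := by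
          simpa using (hasDerivAt_id x).div_const (2 * b)
        have h2 := (Real.hasDerivAt_rpow_const (x := x) (p := pm / 2) (Or.inl hx0.ne')).const_mul (1 / pm)
        exact h1.sub h2
      rw [hder.deriv]
      have hgt : b⁻¹ < x ^ (pm / 2 - 1) := by
        rw [← key]; exact Real.rpow_lt_rpow ha₁pos.le hx1 (by linarith)
      have e1 : 1 / (2 * b) = b⁻¹ / 2 := by rw [one_div, mul_inv]; ring
      have e2 : (1 / pm) * (pm / 2 * x ^ (pm / 2 - 1)) = x ^ (pm / 2 - 1) / 2 := by
        field_simp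
      rw [e1, e2]; linarith
  -- F2 strictly decreasing on [1, ∞)
  have hF2anti : StrictAntiOn F2 (Ici 1) := by
    apply strictAntiOn_of_deriv_neg (convex_Ici _)
    · apply ContinuousOn.sub (continuousOn_id.div_const _)
      exact continuousOn_const.mul (contpow _ _ (fun x hx => by
        have : (1:ℝ) ≤ x := hx; positivity))
    · intro x hx
      rw [interior_Ici] at hx
      have hx0 : 0 < x := lt_trans one_pos hx
      have hder : HasDerivAt F2 (1 / (2 * b) - (1 / pm) * (pp / 2 * x ^ (pp / 2 - 1))) x := by
        have h1 : HasDerivAt (fun x : ℝ => x / (2 * b)) (1 / (2 * b)) x := by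
          simpa using (hasDerivAt_id x).div_const (2 * b)
        have h2 := (Real.hasDerivAt_rpow_const (x := x) (p := pp / 2) (Or.inl hx0.ne')).const_mul (1 / pm)
        exact h1.sub h2
      rw [hder.deriv]
      have hy1 : 1 < x ^ (pp / 2 - 1) :=
        (Real.one_lt_rpow_iff_of_pos hx0).mpr (Or.inl ⟨hx, by linarith⟩)
      have hble : 1 / (2 * b) ≤ 1 / 2 := by
        rw [div_le_div_iff₀ (by positivity) two_pos]; linarith
      have e2 : (1 / pm) * (pp / 2 * x ^ (pp / 2 - 1)) = pp * x ^ (pp / 2 - 1) / (2 * pm) := by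
        ring
      have h5 : 1 / 2 < pp * x ^ (pp / 2 - 1) / (2 * pm) := by
        rw [div_lt_div_iff₀ two_pos (by positivity)]
        nlinarith [mul_lt_mul_of_pos_left hy1 (show (0:ℝ) < pp by linarith)]
      rw [e2]; linarith
  -- G agrees with F1 on [a₁,1] and with F2 on [1,∞)
  have hGF1 : ∀ x ∈ Icc a₁ 1, G x = F1 x := by
    intro x hx
    have hx0 : 0 < x := lt_of_lt_of_le ha₁pos hx.1
    have : x ^ (pp / 2) ≤ x ^ (pm / 2) :=
      Real.rpow_le_rpow_of_exponent_ge hx0 hx.2 (by linarith)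
    simp only [hGdef, hF1def, max_eq_right this]
  have hGF2 : ∀ x ∈ Ici (1:ℝ), G x = F2 x := by
    intro x hx
    have : x ^ (pm / 2) ≤ x ^ (pp / 2) :=
      Real.rpow_le_rpow_of_exponent_le hx (by linarith)
    simp only [hGdef, hF2def, max_eq_left this]
  -- glue
  intro x hx y hy hxy
  simp only [mem_Ici] at hx hy
  by_cases hy1 : y ≤ 1
  · rw [hGF1 x ⟨hx, hxy.le.trans hy1⟩, hGF1 y ⟨hy, hy1⟩]
    exact hF1anti ⟨hx, hxy.le.trans hy1⟩ ⟨hy, hy1⟩ hxy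
  · push_neg at hy1
    by_cases hx1 : x < 1
    · have h1 : G y < G 1 := by
        rw [hGF2 y (le_of_lt hy1), hGF2 1 (mem_Ici.mpr le_rfl)]
        exact hF2anti (mem_Ici.mpr le_rfl) (le_of_lt hy1) hy1
      have h2 : G 1 < G x := by
        rw [hGF1 x ⟨hx, hx1.le⟩, hGF1 1 ⟨ha₁le1, le_rfl⟩]
        exact hF1anti ⟨hx, hx1.le⟩ ⟨ha₁le1, le_rfl⟩ hx1
      linarith
    · push_neg at hx1
      rw [hGF2 x hx1, hGF2 y (hx1.trans hxy.le)]
      exact hF2anti hx1 (hx1.trans hxy.le) hxy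

/-- Lemma 3.2(1), abstract form: if `α` is continuous and positive on `[0,∞)`, `E` is
non-increasing with `G(α(t)) ≤ E(t)`, `E(0) < E₁` and `α(0) > α₁`, then there exists
`α₂ > α₁` with `G(α₂) = E(0)` and `α(t) ≥ α₂` for all `t ≥ 0`. -/
theorem lemma32_part1 (pm pp B₁ α₁ E₁ : ℝ) (G α E : ℝ → ℝ)
    (hpm : 2 < pm) (hpmpp : pm ≤ pp) (hB₁ : 1 ≤ B₁)
    (hG : ∀ x, G x = x / (2 * B₁ ^ 2) - (1 / pm) * max (x ^ (pp / 2)) (x ^ (pm / 2)))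
    (hα₁ : α₁ = (B₁ ^ 2) ^ (-2 / (pm - 2)))
    (hE₁ : E₁ = (1 / 2 - 1 / pm) * α₁ ^ (pm / 2))
    (hα_cont : ContinuousOn α (Set.Ici (0 : ℝ)))
    (hα_pos : ∀ t, 0 ≤ t → 0 < α t)
    (hE_anti : ∀ s t, 0 ≤ s → s ≤ t → E t ≤ E s)
    (hGE : ∀ t, 0 ≤ t → G (α t) ≤ E t)
    (hE0 : E 0 < E₁) (hα0 : α₁ < α 0) :
    ∃ α₂, α₁ < α₂ ∧ G α₂ = E 0 ∧ ∀ t, 0 ≤ t → α₂ ≤ α t := by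
  set b : ℝ := B₁ ^ 2 with hbdef
  have hb : 1 ≤ b := by nlinarith
  have hb0 : 0 < b := lt_of_lt_of_le one_pos hb
  have hpm0 : (0:ℝ) < pm := by linarith
  have hα₁pos : 0 < α₁ := hα₁ ▸ Real.rpow_pos_of_pos hb0 _
  have hα₁le1 : α₁ ≤ 1 := hα₁ ▸
    Real.rpow_le_one_of_one_le_of_nonpos hb
      (div_nonpos_of_nonpos_of_nonneg (by norm_num) (by linarith))
  have key : α₁ ^ (pm / 2 - 1) = b⁻¹ := hα₁ ▸ aux_rpow_key pm b hpm hb0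
  -- strict antitonicity of G on [α₁, ∞)
  have hantiG : StrictAntiOn G (Ici α₁) := by
    intro x hx y hy hxy
    have := aux_strictAnti pm pp b hpm hpmpp hb (hα₁ ▸ hx) (hα₁ ▸ hy) hxy
    rw [hG x, hG y]; exact this
  -- G α₁ = E₁
  have hGα₁ : G α₁ = E₁ := by
    rw [hG, hE₁]
    have hmax : max (α₁ ^ (pp / 2)) (α₁ ^ (pm / 2)) = α₁ ^ (pm / 2) :=
      max_eq_right (Real.rpow_le_rpow_of_exponent_ge hα₁pos hα₁le1 (by linarith))
    have hsplit : α₁ ^ (pm / 2) = α₁ * b⁻¹ := by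
      calc α₁ ^ (pm / 2) = α₁ ^ (1 + (pm / 2 - 1)) := by ring_nf
        _ = α₁ ^ (1:ℝ) * α₁ ^ (pm / 2 - 1) := Real.rpow_add hα₁pos _ _
        _ = α₁ * b⁻¹ := by rw [Real.rpow_one, key]
    rw [hmax, hsplit]
    field_simp
  -- a point where G drops below E 0
  have htend : Tendsto (fun x : ℝ => x - (1 / pm) * x ^ (pp / 2)) atTop atBot := by
    have h1 : Tendsto (fun x : ℝ => x * (1 - (1 / pm) * x ^ (pp / 2 - 1))) atTop atBot := by
      apply Tendsto.atTop_mul_atBot₀ tendsto_id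
      have h0 := (tendsto_rpow_atTop (show (0:ℝ) < pp / 2 - 1 by linarith)).const_mul_atTop
        (show (0:ℝ) < 1 / pm by positivity)
      have h2 : Tendsto (fun x : ℝ => -((1 / pm) * x ^ (pp / 2 - 1))) atTop atBot :=
        tendsto_neg_atTop_atBot.comp h0
      simpa [sub_eq_add_neg] using tendsto_atBot_add_const_left atTop (1:ℝ) h2
    refine h1.congr' ?_
    filter_upwards [eventually_gt_atTop (0:ℝ)] with x hx
    have hxx : x * x ^ (pp / 2 - 1) = x ^ (pp / 2) := by
      calc x * x ^ (pp / 2 - 1) = x ^ (1:ℝ) * x ^ (pp / 2 - 1) := by rw [Real.rpow_one]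
        _ = x ^ (1 + (pp / 2 - 1)) := (Real.rpow_add hx _ _).symm
        _ = x ^ (pp / 2) := by ring_nf
    calc x * (1 - (1 / pm) * x ^ (pp / 2 - 1))
        = x - (1 / pm) * (x * x ^ (pp / 2 - 1)) := by ring
      _ = x - (1 / pm) * x ^ (pp / 2) := by rw [hxx]
  obtain ⟨x₀, hx₀gt, hx₀lt⟩ :=
    ((eventually_gt_atTop (max α₁ 1)).and (htend.eventually (eventually_lt_atBot (E 0)))).exists
  have hx₀1 : (1:ℝ) < x₀ := lt_of_le_of_lt (le_max_right _ _) hx₀gt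
  have hx₀α₁ : α₁ < x₀ := lt_of_le_of_lt (le_max_left _ _) hx₀gt
  have hGx₀ : G x₀ < E 0 := by
    rw [hG]
    have h1 : x₀ / (2 * b) ≤ x₀ := by
      rw [div_le_iff₀ (by positivity)]; nlinarith
    have h3 : (1 / pm) * x₀ ^ (pp / 2) ≤ (1 / pm) * max (x₀ ^ (pp / 2)) (x₀ ^ (pm / 2)) :=
      mul_le_mul_of_nonneg_left (le_max_left _ _) (by positivity)
    linarith
  -- IVT to find α₂
  have hcontG : ContinuousOn G (Icc α₁ x₀) := by
    have hpow : ∀ q : ℝ, ContinuousOn (fun x : ℝ => x ^ q) (Icc α₁ x₀) := fun q x hx =>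
      (Real.continuousAt_rpow_const x q (Or.inl (ne_of_gt (lt_of_lt_of_le hα₁pos hx.1)))).continuousWithinAt
    have : ContinuousOn (fun x : ℝ => x / (2 * b) - (1 / pm) * max (x ^ (pp / 2)) (x ^ (pm / 2)))
        (Icc α₁ x₀) :=
      (continuousOn_id.div_const _).sub (continuousOn_const.mul ((hpow _).sup (hpow _)))
    exact this.congr (fun x _ => hG x)
  have hmem : E 0 ∈ Icc (G x₀) (G α₁) := ⟨hGx₀.le, by rw [hGα₁]; exact hE0.le⟩
  obtain ⟨α₂, hα₂mem, hGα₂⟩ := intermediate_value_Icc' hx₀α₁.le hcontG hmem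
  have hα₂gt : α₁ < α₂ := by
    rcases eq_or_lt_of_le hα₂mem.1 with h | h
    · exfalso; rw [← h, hGα₁] at hGα₂; linarith
    · exact h
  refine ⟨α₂, hα₂gt, hGα₂, ?_⟩
  -- α 0 ≥ α₂
  have hα0ge : α₂ ≤ α 0 := by
    by_contra h
    push_neg at h
    have h1 := hantiG (mem_Ici.mpr hα0.le) (mem_Ici.mpr hα₂gt.le) h
    have h2 := hGE 0 le_rfl
    rw [hGα₂] at h1
    linarith
  intro t ht
  by_contra hlt
  push_neg at hlt
  set c : ℝ := (max α₁ (α t) + α₂) / 2 with hcdef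
  have hc1 : α₁ < c := by
    have := le_max_left α₁ (α t); simp only [hcdef]; linarith
  have hc2 : c < α₂ := by
    have hm : max α₁ (α t) < α₂ := max_lt hα₂gt hlt
    simp only [hcdef]; linarith
  have hc3 : α t < c := by
    have := le_max_right α₁ (α t); simp only [hcdef]; linarith
  have hc4 : c ≤ α 0 := hc2.le.trans hα0ge
  obtain ⟨s, hs, hsc⟩ :=
    intermediate_value_Icc' ht (hα_cont.mono Set.Icc_subset_Ici_self) ⟨hc3.le, hc4⟩
  have h5 := hGE s hs.1
  have h6 := hE_anti 0 s le_rfl hs.1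
  have h7 : G α₂ < G c := hantiG (mem_Ici.mpr hc1.le) (mem_Ici.mpr hα₂gt.le) hc2
  rw [hGα₂] at h7
  rw [hsc] at h5
  linarith
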